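/- For Pareto distributions P_t = Pareto(1,t), t > 2, define ℓ(t,ϑ) = W₂²(P_t,P_ϑ) = 2(t−ϑ)²/((tϑ−t−ϑ)(t−2)(ϑ−2)). Then ∂ℓ/∂t (t,ϑ) = 2(t−ϑ)((2ϑ−1)t − 3ϑ) / ((t−2)²((ϑ−1)t − ϑ)²), which is positive for t > ϑ, negative for t < ϑ, and zero at t = ϑ (for all t, ϑ > 2). In particular, t ↦ ℓ(t,ϑ) is strictly decreasing on (2,ϑ) and strictly increasing on (ϑ,∞). -/

import Mathlib

open Real Set

lemma stmt8_deriv (ϑ : ℝ) (hϑ : 2 < ϑ) (t : ℝ) (ht : 2 < t) :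
    HasDerivAt (fun s : ℝ => 2 * (s - ϑ) ^ 2 / ((s * ϑ - s - ϑ) * (s - 2) * (ϑ - 2)))
      (2 * (t - ϑ) * ((2 * ϑ - 1) * t - 3 * ϑ) / ((t - 2) ^ 2 * ((ϑ - 1) * t - ϑ) ^ 2)) t := by
  have h1 : 0 < (ϑ - 1) * t - ϑ := by nlinarith
  have h2 : 0 < t - 2 := by linarith
  have h3 : 0 < ϑ - 2 := by linarith
  have hD : (t * ϑ - t - ϑ) * (t - 2) * (ϑ - 2) ≠ 0 := by
    have : t * ϑ - t - ϑ = (ϑ - 1) * t - ϑ := by ring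
    rw [this]; positivity
  have hN : HasDerivAt (fun s : ℝ => 2 * (s - ϑ) ^ 2) (4 * (t - ϑ)) t := by
    have := (((hasDerivAt_id t).sub_const ϑ).pow 2).const_mul 2
    refine this.congr_deriv ?_; simp [id]; ring
  have hDen : HasDerivAt (fun s : ℝ => (s * ϑ - s - ϑ) * (s - 2) * (ϑ - 2))
      (((ϑ - 1) * (t - 2) + (t * ϑ - t - ϑ)) * (ϑ - 2)) t := by
    have ha : HasDerivAt (fun s : ℝ => s * ϑ - s - ϑ) (ϑ - 1) t := by
      have := (((hasDerivAt_id t).mul_const ϑ).sub (hasDerivAt_id t)).sub_const ϑ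
      simpa using this
    have hb : HasDerivAt (fun s : ℝ => s - 2) 1 t := (hasDerivAt_id t).sub_const 2
    have := (ha.mul hb).mul_const (ϑ - 2)
    refine this.congr_deriv ?_; ring
  have := hN.div hDen hD
  refine this.congr_deriv ?_
  have ht2 : (t - 2) ≠ 0 := ne_of_gt h2
  have hr : (ϑ - 1) * t - ϑ ≠ 0 := ne_of_gt h1
  have hϑ2 : (ϑ - 2) ≠ 0 := ne_of_gt h3
  field_simp
  ring

theorem stmt8 (ϑ : ℝ) (hϑ : 2 < ϑ) :
    (∀ t : ℝ, 2 < t →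
      HasDerivAt (fun s : ℝ => 2 * (s - ϑ) ^ 2 / ((s * ϑ - s - ϑ) * (s - 2) * (ϑ - 2)))
        (2 * (t - ϑ) * ((2 * ϑ - 1) * t - 3 * ϑ) / ((t - 2) ^ 2 * ((ϑ - 1) * t - ϑ) ^ 2)) t) ∧
    (∀ t : ℝ, 2 < t → ϑ < t →
      0 < 2 * (t - ϑ) * ((2 * ϑ - 1) * t - 3 * ϑ) / ((t - 2) ^ 2 * ((ϑ - 1) * t - ϑ) ^ 2)) ∧
    (∀ t : ℝ, 2 < t → t < ϑ →
      2 * (t - ϑ) * ((2 * ϑ - 1) * t - 3 * ϑ) / ((t - 2) ^ 2 * ((ϑ - 1) * t - ϑ) ^ 2) < 0) ∧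
    (2 * (ϑ - ϑ) * ((2 * ϑ - 1) * ϑ - 3 * ϑ) / ((ϑ - 2) ^ 2 * ((ϑ - 1) * ϑ - ϑ) ^ 2) = 0) ∧
    StrictAntiOn (fun s : ℝ => 2 * (s - ϑ) ^ 2 / ((s * ϑ - s - ϑ) * (s - 2) * (ϑ - 2)))
      (Set.Ioo 2 ϑ) ∧
    StrictMonoOn (fun s : ℝ => 2 * (s - ϑ) ^ 2 / ((s * ϑ - s - ϑ) * (s - 2) * (ϑ - 2)))
      (Set.Ioi ϑ) := by
  have hpos : ∀ t : ℝ, 2 < t → ϑ < t →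
      0 < 2 * (t - ϑ) * ((2 * ϑ - 1) * t - 3 * ϑ) / ((t - 2) ^ 2 * ((ϑ - 1) * t - ϑ) ^ 2) := by
    intro t ht htϑ
    have h1 : 0 < (ϑ - 1) * t - ϑ := by nlinarith
    have hnum : 0 < 2 * (t - ϑ) * ((2 * ϑ - 1) * t - 3 * ϑ) := by nlinarith
    have hden : 0 < (t - 2) ^ 2 * ((ϑ - 1) * t - ϑ) ^ 2 := by
      have : (0:ℝ) < t - 2 := by linarith
      positivity
    exact div_pos hnum hden
  have hneg : ∀ t : ℝ, 2 < t → t < ϑ →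
      2 * (t - ϑ) * ((2 * ϑ - 1) * t - 3 * ϑ) / ((t - 2) ^ 2 * ((ϑ - 1) * t - ϑ) ^ 2) < 0 := by
    intro t ht htϑ
    have h1 : 0 < (ϑ - 1) * t - ϑ := by nlinarith
    have h4 : 0 < (2 * ϑ - 1) * t - 3 * ϑ := by nlinarith
    have hnum : 2 * (t - ϑ) * ((2 * ϑ - 1) * t - 3 * ϑ) < 0 := by
      nlinarith [mul_pos h4 (show (0:ℝ) < ϑ - t by linarith)]
    have hden : 0 < (t - 2) ^ 2 * ((ϑ - 1) * t - ϑ) ^ 2 := by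
      have : (0:ℝ) < t - 2 := by linarith
      positivity
    exact div_neg_of_neg_of_pos hnum hden
  refine ⟨fun t ht => stmt8_deriv ϑ hϑ t ht, hpos, hneg, by simp, ?_, ?_⟩
  · apply strictAntiOn_of_deriv_neg (convex_Ioo 2 ϑ)
    · intro x hx
      exact (stmt8_deriv ϑ hϑ x hx.1).continuousAt.continuousWithinAt
    · intro x hx
      rw [interior_Ioo] at hx
      rw [(stmt8_deriv ϑ hϑ x hx.1).deriv]
      exact hneg x hx.1 hx.2
  · apply strictMonoOn_of_deriv_pos (convex_Ioi ϑ)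
    · intro x hx
      exact (stmt8_deriv ϑ hϑ x (lt_trans hϑ hx)).continuousAt.continuousWithinAt
    · intro x hx
      rw [interior_Ioi] at hx
      rw [(stmt8_deriv ϑ hϑ x (lt_trans hϑ hx)).deriv]
      exact hpos x (lt_trans hϑ hx) hx
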